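/- For Γ ≠ 0 let a(Γ) = (1/2)(Γ² + 2 + √(Γ⁴+4Γ²)) be the squared norm of A = [[Γ,−1],[1,0]], and let u(Γ) ∈ (0,π) (mod π) be the direction of the unstable (most expanded image) singular direction, characterized by Γ·cot u = a − 1. Then (−1/sin²u)·(du/dΓ) = 1/2 + Γ²/(2√(Γ⁴+4Γ²)) > 1/2; in particular du/dΓ ≤ −(1/2)sin²u < 0, so the unstable direction moves monotonically in Γ with definite speed. -/

import Mathlib

open Real

/-- `a(Γ) = ‖A(Γ)‖²` for the transfer matrix `A(Γ) = [[Γ,−1],[1,0]]`. -/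
noncomputable def aOf (Γ : ℝ) : ℝ := (1 / 2) * (Γ ^ 2 + 2 + Real.sqrt (Γ ^ 4 + 4 * Γ ^ 2))

/-- let `u(Γ)` be a differentiable choice of the unstable singular direction,
characterized by `Γ cot u = a − 1` (with `sin u ≠ 0`). Then for `Γ ≠ 0`,
`du/dΓ = −sin²(u) (1/2 + Γ²/(2√(Γ⁴+4Γ²)))`, the factor `1/2 + Γ²/(2√(Γ⁴+4Γ²))` exceeds `1/2`,
and in particular `du/dΓ ≤ −(1/2) sin²(u) < 0`. -/
theorem stmt_9 (u : ℝ → ℝ)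
    (hdiff : ∀ Γ : ℝ, Γ ≠ 0 → DifferentiableAt ℝ u Γ)
    (hsin : ∀ Γ : ℝ, Γ ≠ 0 → Real.sin (u Γ) ≠ 0)
    (hchar : ∀ Γ : ℝ, Γ ≠ 0 → Γ * (Real.cos (u Γ) / Real.sin (u Γ)) = aOf Γ - 1) :
    ∀ Γ : ℝ, Γ ≠ 0 →
      deriv u Γ =
          -(Real.sin (u Γ)) ^ 2 * (1 / 2 + Γ ^ 2 / (2 * Real.sqrt (Γ ^ 4 + 4 * Γ ^ 2))) ∧
        1 / 2 + Γ ^ 2 / (2 * Real.sqrt (Γ ^ 4 + 4 * Γ ^ 2)) > 1 / 2 ∧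
        deriv u Γ ≤ -(1 / 2) * (Real.sin (u Γ)) ^ 2 ∧
        deriv u Γ < 0 := by
  intro Γ hΓ
  have hs : Real.sin (u Γ) ≠ 0 := hsin Γ hΓ
  set s := Real.sin (u Γ) with hs_def
  set c := Real.cos (u Γ) with hc_def
  have hD : (0:ℝ) < Γ ^ 4 + 4 * Γ ^ 2 := by positivity
  set sq := Real.sqrt (Γ ^ 4 + 4 * Γ ^ 2) with hsq_def
  have hsq : 0 < sq := Real.sqrt_pos.mpr hD
  have hsq2 : sq ^ 2 = Γ ^ 4 + 4 * Γ ^ 2 := Real.sq_sqrt hD.le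
  set u' := deriv u Γ with hu'_def
  -- derivative of aOf
  have hinner : HasDerivAt (fun x : ℝ => x ^ 4 + 4 * x ^ 2) (4 * Γ ^ 3 + 8 * Γ) Γ := by
    have h1 := (hasDerivAt_pow 4 Γ)
    have h2 := (hasDerivAt_pow 2 Γ).const_mul (4:ℝ)
    have := h1.add h2
    exact this.congr_deriv (by norm_num; ring)
  have hsqrt : HasDerivAt (fun x : ℝ => Real.sqrt (x ^ 4 + 4 * x ^ 2))
      (1 / (2 * sq) * (4 * Γ ^ 3 + 8 * Γ)) Γ :=
    (Real.hasDerivAt_sqrt (ne_of_gt hD)).comp Γ hinner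
  have haOf : HasDerivAt aOf
      ((1 / 2) * (2 * Γ + 1 / (2 * sq) * (4 * Γ ^ 3 + 8 * Γ))) Γ := by
    have h1 : HasDerivAt (fun x : ℝ => x ^ 2 + 2 + Real.sqrt (x ^ 4 + 4 * x ^ 2))
        (2 * Γ + 1 / (2 * sq) * (4 * Γ ^ 3 + 8 * Γ)) Γ := by
      have hp : HasDerivAt (fun x : ℝ => x ^ 2 + 2) (2 * Γ) Γ := by
        simpa using (hasDerivAt_pow 2 Γ).add_const (2:ℝ)
      exact hp.add hsqrt
    exact h1.const_mul (1/2 : ℝ)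
  -- derivative of LHS
  have hu : HasDerivAt u u' Γ := (hdiff Γ hΓ).hasDerivAt
  have hcos : HasDerivAt (fun x => Real.cos (u x)) (-s * u') Γ :=
    (Real.hasDerivAt_cos (u Γ)).comp Γ hu
  have hsinD : HasDerivAt (fun x => Real.sin (u x)) (c * u') Γ :=
    (Real.hasDerivAt_sin (u Γ)).comp Γ hu
  have hpyth : s ^ 2 + c ^ 2 = 1 := by
    rw [hs_def, hc_def]; exact Real.sin_sq_add_cos_sq (u Γ)
  have hquot : HasDerivAt (fun x => Real.cos (u x) / Real.sin (u x))
      (-u' / s ^ 2) Γ := by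
    have h0 := hcos.div hsinD hs
    refine h0.congr_deriv ?_
    rw [← hs_def, ← hc_def]
    field_simp
    linear_combination (-u') * hpyth
  have hLHS : HasDerivAt (fun x => x * (Real.cos (u x) / Real.sin (u x)))
      (1 * (c / s) + Γ * (-u' / s ^ 2)) Γ :=
    (hasDerivAt_id Γ).mul hquot
  have hRHS : HasDerivAt (fun x => aOf x - 1)
      ((1 / 2) * (2 * Γ + 1 / (2 * sq) * (4 * Γ ^ 3 + 8 * Γ))) Γ := haOf.sub_const 1
  -- the two functions agree near Γ
  have heq : (fun x => x * (Real.cos (u x) / Real.sin (u x)))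
      =ᶠ[nhds Γ] (fun x => aOf x - 1) := by
    filter_upwards [IsOpen.mem_nhds (isOpen_ne) hΓ] with x hx
    exact hchar x hx
  have hLHS' : HasDerivAt (fun x => aOf x - 1)
      (1 * (c / s) + Γ * (-u' / s ^ 2)) Γ := by
    exact hLHS.congr_of_eventuallyEq heq.symm
  have hE : 1 * (c / s) + Γ * (-u' / s ^ 2)
      = (1 / 2) * (2 * Γ + 1 / (2 * sq) * (4 * Γ ^ 3 + 8 * Γ)) :=
    hLHS'.unique hRHS
  have hch : Γ * (c / s) = (1 / 2) * (Γ ^ 2 + 2 + sq) - 1 := by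
    have := hchar Γ hΓ
    rw [aOf] at this
    exact this
  -- solve for u'
  have hmain : u' = -s ^ 2 * (1 / 2 + Γ ^ 2 / (2 * sq)) := by
    have hΓ2 : Γ ^ 2 ≠ 0 := pow_ne_zero 2 hΓ
    field_simp at hE hch ⊢
    have hne : (2 * Γ ^ 2 * s) ≠ 0 := by
      simp [hΓ, hs]
    refine mul_right_cancel₀ hne ?_
    linear_combination (-(Γ * s)) * hE + (2 * sq * s ^ 2) * hch + (2 * s ^ 3) * hsq2
  have hfac : 1 / 2 + Γ ^ 2 / (2 * sq) > 1 / 2 := by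
    have : 0 < Γ ^ 2 / (2 * sq) := by positivity
    linarith
  have hs2 : 0 < s ^ 2 := by positivity
  refine ⟨hmain, hfac, ?_, ?_⟩
  · rw [hmain]; nlinarith [hs2, hfac]
  · rw [hmain]; nlinarith [hs2, hfac]
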